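/- Let n ≥ 3, let Δ ≥ 1 and k > 3Δ be integers, and let (X_t)_{t≥0} be a stochastic process adapted to a filtration (F_t)_{t≥0} with values in {0, 1, …, n} satisfying: (i) |X_{t+1} − X_t| ≤ 1 almost surely; (ii) the state n is absorbing (almost surely X_{t+1} = n on {X_t = n}); and (iii) E[X_{t+1} − X_t | F_t] ≥ ((n − X_t)/n)·((k − 3Δ)/(k − Δ)) almost surely on the event {X_t < n}, for every t. Let T′ = ⌈2·((k − Δ)/(k − 3Δ))·n·ln n⌉. Then P(X_{T′} = n) ≥ 1/2. -/

import Mathlib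

open MeasureTheory
open scoped ENNReal

/-- Coalescence-phase analysis: a process on `{0, …, n}` with increments bounded
by `1`, absorbing state `n`, and conditional drift at least
`((n − X_t)/n)·((k − 3Δ)/(k − Δ))` (where `k > 3Δ`) is absorbed at `n` after
`T' = ⌈2·((k − Δ)/(k − 3Δ))·n·ln n⌉` steps with probability at least `1/2`. -/
theorem coalescence_probability {Ω : Type*} {mΩ : MeasurableSpace Ω}
    (μ : Measure Ω) [IsProbabilityMeasure μ]
    (n Δ k : ℕ) (hn : 3 ≤ n) (hΔ : 1 ≤ Δ) (hk : 3 * Δ < k)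
    (F : Filtration ℕ mΩ)
    (X : ℕ → Ω → ℕ)
    (hadapted : ∀ t, Measurable[F t] (X t))
    (hrange : ∀ t ω, X t ω ≤ n)
    (hstep : ∀ t, ∀ᵐ ω ∂μ, |(X (t + 1) ω : ℤ) - (X t ω : ℤ)| ≤ 1)
    (habs : ∀ t, ∀ᵐ ω ∂μ, X t ω = n → X (t + 1) ω = n)
    (hdrift : ∀ t, ∀ᵐ ω ∂μ, X t ω < n →
      (((n : ℝ) - X t ω) / n) * (((k : ℝ) - 3 * Δ) / ((k : ℝ) - Δ))
        ≤ (μ[fun ω' => ((X (t + 1) ω' : ℝ) - (X t ω' : ℝ))|F t]) ω)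
    (T' : ℕ)
    (hT' : T' = ⌈2 * (((k : ℝ) - Δ) / ((k : ℝ) - 3 * Δ)) * n * Real.log n⌉₊) :
    (1 : ℝ≥0∞) / 2 ≤ μ {ω | X T' ω = n} := by
  -- basic constants
  have hΔR : (1:ℝ) ≤ Δ := by exact_mod_cast hΔ
  have hkR : 3 * (Δ:ℝ) < k := by exact_mod_cast hk
  set c : ℝ := ((k:ℝ) - 3*Δ)/((k:ℝ) - Δ) with hc
  have hnum : (0:ℝ) < (k:ℝ) - 3*Δ := by linarith
  have hden : (0:ℝ) < (k:ℝ) - Δ := by linarith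
  have hc0 : 0 < c := div_pos hnum hden
  have hc1 : c ≤ 1 := by rw [hc, div_le_one hden]; linarith
  have hnR : (3:ℝ) ≤ n := by exact_mod_cast hn
  have hn0 : (0:ℝ) < n := by linarith
  have h1cn0 : 0 ≤ 1 - c/n := by
    have : c/n ≤ 1/3 := by
      rw [div_le_div_iff₀ hn0 (by norm_num)]
      nlinarith
    linarith
  -- measurability and integrability
  have hXmeas : ∀ t, Measurable (X t) := fun t => (hadapted t).mono (F.le t) le_rfl
  have hXRmeas : ∀ t, Measurable (fun ω => (X t ω : ℝ)) := fun t =>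
    measurable_from_top.comp (hXmeas t)
  have hXint : ∀ t, Integrable (fun ω => (X t ω : ℝ)) μ := by
    intro t
    refine Integrable.mono' (integrable_const (n:ℝ)) (hXRmeas t).aestronglyMeasurable ?_
    filter_upwards with ω
    rw [Real.norm_eq_abs, abs_of_nonneg (by positivity)]
    exact_mod_cast hrange t ω
  set g : ℕ → Ω → ℝ := fun t ω => (n:ℝ) - X t ω with hg
  have hgint : ∀ t, Integrable (g t) μ := fun t => (integrable_const (n:ℝ)).sub (hXint t)
  have hg0 : ∀ t ω, 0 ≤ g t ω := by
    intro t ω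
    have : (X t ω : ℝ) ≤ n := by exact_mod_cast hrange t ω
    simp only [hg]; linarith
  have hgn : ∀ t ω, g t ω ≤ n := by
    intro t ω
    have : (0:ℝ) ≤ X t ω := by positivity
    simp only [hg]; linarith
  -- key one-step inequality
  have key : ∀ t, ∫ ω, g (t+1) ω ∂μ ≤ (1 - c/n) * ∫ ω, g t ω ∂μ := by
    intro t
    set D : Ω → ℝ := fun ω => (X (t+1) ω : ℝ) - X t ω with hD
    have hDint : Integrable D μ := (hXint (t+1)).sub (hXint t)
    set A : Set Ω := {ω | X t ω < n} with hA
    have hAm : MeasurableSet[F t] A := hadapted t measurableSet_Iio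
    have hAm' : MeasurableSet A := F.le t A hAm
    -- on Aᶜ, D = 0 a.e.
    have hcompl : ∫ ω in Aᶜ, D ω ∂μ = 0 := by
      apply integral_eq_zero_of_ae
      rw [Filter.EventuallyEq, ae_restrict_iff' hAm'.compl]
      filter_upwards [habs t] with ω habsω hωc
      have hXn : X t ω = n := le_antisymm (hrange t ω) (not_lt.mp hωc)
      have : X (t+1) ω = n := habsω hXn
      simp [hD, this, hXn]
    -- on A, drift bound
    have hfA : ∫ ω in A, (c/n) * g t ω ∂μ ≤ ∫ ω in A, (μ[D|F t]) ω ∂μ := by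
      apply integral_mono_ae (((hgint t).const_mul _).integrableOn)
        (integrable_condExp.integrableOn)
      rw [Filter.EventuallyLE, ae_restrict_iff' hAm']
      filter_upwards [hdrift t] with ω hdω hωA
      have h := hdω hωA
      have : (c/n) * g t ω = (((n : ℝ) - X t ω) / n) * c := by
        simp only [hg]; ring
      rw [this]
      exact h
    have hcond : ∫ ω in A, (μ[D|F t]) ω ∂μ = ∫ ω in A, D ω ∂μ :=
      setIntegral_condExp (F.le t) hDint hAm
    -- (c/n) g t vanishes off A
    have hcompl2 : ∫ ω in Aᶜ, (c/n) * g t ω ∂μ = 0 := by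
      apply integral_eq_zero_of_ae
      rw [Filter.EventuallyEq, ae_restrict_iff' hAm'.compl]
      filter_upwards with ω hωc
      have hXn : X t ω = n := le_antisymm (hrange t ω) (not_lt.mp hωc)
      simp [hg, hXn]
    have hsplitD : ∫ ω, D ω ∂μ = ∫ ω in A, D ω ∂μ := by
      rw [← integral_add_compl hAm' hDint, hcompl, add_zero]
    have hsplitg : ∫ ω, (c/n) * g t ω ∂μ = ∫ ω in A, (c/n) * g t ω ∂μ := by
      rw [← integral_add_compl hAm' ((hgint t).const_mul _), hcompl2, add_zero]
    have hmain : (c/n) * ∫ ω, g t ω ∂μ ≤ ∫ ω, D ω ∂μ := by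
      rw [← integral_const_mul, hsplitg, hsplitD]
      calc ∫ ω in A, (c/n) * g t ω ∂μ ≤ ∫ ω in A, (μ[D|F t]) ω ∂μ := hfA
        _ = ∫ ω in A, D ω ∂μ := hcond
    have hgd : ∫ ω, g (t+1) ω ∂μ = ∫ ω, g t ω ∂μ - ∫ ω, D ω ∂μ := by
      rw [← integral_sub (hgint t) hDint]
      congr 1
      funext ω
      simp only [hg, hD]; ring
    rw [hgd]
    linarith
  -- iterated bound
  have bound : ∀ t, ∫ ω, g t ω ∂μ ≤ n * (1 - c/n)^t := by
    intro t
    induction t with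
    | zero =>
      simp only [pow_zero, mul_one]
      calc ∫ ω, g 0 ω ∂μ ≤ ∫ _ω, (n:ℝ) ∂μ :=
            integral_mono (hgint 0) (integrable_const _) (hgn 0)
        _ = n := by simp
    | succ t ih =>
      calc ∫ ω, g (t+1) ω ∂μ ≤ (1 - c/n) * ∫ ω, g t ω ∂μ := key t
        _ ≤ (1 - c/n) * (n * (1 - c/n)^t) := by
            exact mul_le_mul_of_nonneg_left ih h1cn0
        _ = n * (1 - c/n)^(t+1) := by ring
  -- numeric bound at time T'
  have hlog : 0 ≤ Real.log n := Real.log_nonneg (by linarith)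
  have hceil : 2 * (((k:ℝ) - Δ) / ((k:ℝ) - 3*Δ)) * n * Real.log n ≤ T' := by
    rw [hT']; exact Nat.le_ceil _
  have hTc : 2 * Real.log n ≤ (T':ℝ) * (c/n) := by
    have hcn0 : 0 ≤ c/n := by positivity
    have h1 : (2 * (((k:ℝ) - Δ) / ((k:ℝ) - 3*Δ)) * n * Real.log n) * (c/n)
        = 2 * Real.log n := by
      rw [hc]; field_simp; exact mul_div_cancel_left₀ _ (ne_of_gt (by linarith : (0:ℝ) < (k:ℝ) - Δ * 3))
    calc 2 * Real.log n
        = (2 * (((k:ℝ) - Δ) / ((k:ℝ) - 3*Δ)) * n * Real.log n) * (c/n) := h1.symm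
      _ ≤ (T':ℝ) * (c/n) := mul_le_mul_of_nonneg_right hceil hcn0
  have hpow : (1 - c/n)^T' ≤ (n:ℝ)⁻¹ * (n:ℝ)⁻¹ := by
    have h1 : (1 - c/n)^T' ≤ Real.exp (-(c/n)) ^ T' :=
      pow_le_pow_left₀ h1cn0 (by linarith [Real.add_one_le_exp (-(c/n))]) T'
    have h2 : Real.exp (-(c/n)) ^ T' = Real.exp ((T':ℝ) * (-(c/n))) := by
      rw [Real.exp_nat_mul]
    have h3 : Real.exp ((T':ℝ) * (-(c/n))) ≤ Real.exp (-(2 * Real.log n)) := by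
      apply Real.exp_le_exp.mpr
      have : (T':ℝ) * (-(c/n)) = -((T':ℝ) * (c/n)) := by ring
      rw [this]
      linarith
    have h4 : Real.exp (-(2 * Real.log n)) = (n:ℝ)⁻¹ * (n:ℝ)⁻¹ := by
      rw [show -(2 * Real.log n) = -Real.log n + -Real.log n by ring,
        Real.exp_add, Real.exp_neg, Real.exp_log hn0]
    calc (1 - c/n)^T' ≤ Real.exp (-(c/n)) ^ T' := h1
      _ = Real.exp ((T':ℝ) * (-(c/n))) := h2
      _ ≤ Real.exp (-(2 * Real.log n)) := h3
      _ = (n:ℝ)⁻¹ * (n:ℝ)⁻¹ := h4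
  have hfinal : ∫ ω, g T' ω ∂μ ≤ 1/3 := by
    have h5 : (n:ℝ) * ((n:ℝ)⁻¹ * (n:ℝ)⁻¹) = (n:ℝ)⁻¹ := by
      field_simp
    have h6 : (n:ℝ)⁻¹ ≤ 1/3 := by
      rw [inv_le_comm₀ (by linarith) (by norm_num)]
      calc (1/3 : ℝ)⁻¹ = 3 := by norm_num
        _ ≤ n := hnR
    calc ∫ ω, g T' ω ∂μ ≤ n * (1 - c/n)^T' := bound T'
      _ ≤ n * ((n:ℝ)⁻¹ * (n:ℝ)⁻¹) := by
          exact mul_le_mul_of_nonneg_left hpow (by positivity)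
      _ = (n:ℝ)⁻¹ := h5
      _ ≤ 1/3 := h6
  -- Markov's inequality
  set S : Set Ω := {ω | X T' ω = n} with hS
  have hSm : MeasurableSet S := hXmeas T' (measurableSet_singleton n)
  have hmarkov : μ Sᶜ ≤ ENNReal.ofReal (1/3) := by
    have hsub : Sᶜ ⊆ {ω | 1 ≤ ENNReal.ofReal (g T' ω)} := by
      intro ω hω
      have hne : X T' ω ≠ n := hω
      have hlt : X T' ω < n := lt_of_le_of_ne (hrange T' ω) hne
      have h1 : (1:ℝ) ≤ g T' ω := by
        have : (X T' ω : ℝ) + 1 ≤ n := by exact_mod_cast hlt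
        simp only [hg]; linarith
      exact le_trans (by simp) (ENNReal.ofReal_le_ofReal h1)
    have haem : AEMeasurable (fun ω => ENNReal.ofReal (g T' ω)) μ :=
      (ENNReal.measurable_ofReal.comp
        ((measurable_const.sub (hXRmeas T')))).aemeasurable
    calc μ Sᶜ ≤ μ {ω | 1 ≤ ENNReal.ofReal (g T' ω)} := measure_mono hsub
      _ = 1 * μ {ω | 1 ≤ ENNReal.ofReal (g T' ω)} := (one_mul _).symm
      _ ≤ ∫⁻ ω, ENNReal.ofReal (g T' ω) ∂μ := mul_meas_ge_le_lintegral₀ haem 1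
      _ = ENNReal.ofReal (∫ ω, g T' ω ∂μ) := by
          rw [ofReal_integral_eq_lintegral_ofReal (hgint T')
            (Filter.Eventually.of_forall (hg0 T'))]
      _ ≤ ENNReal.ofReal (1/3) := ENNReal.ofReal_le_ofReal hfinal
  have hhalf : μ Sᶜ ≤ 1/2 := by
    refine le_trans hmarkov ?_
    rw [show (1:ℝ≥0∞)/2 = ENNReal.ofReal (1/2) by
      rw [ENNReal.ofReal_div_of_pos (by norm_num)]; norm_num]
    exact ENNReal.ofReal_le_ofReal (by norm_num)
  have hadd : μ S + μ Sᶜ = 1 := by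
    rw [measure_add_measure_compl hSm, measure_univ]
  have h1 : (1:ℝ≥0∞) - 1/2 = 1/2 := by
    rw [ENNReal.sub_half ENNReal.one_ne_top]
  rw [← h1, tsub_le_iff_left]
  calc (1:ℝ≥0∞) = μ S + μ Sᶜ := hadd.symm
    _ ≤ μ S + 1/2 := add_le_add_right hhalf _
    _ = 1/2 + μ S := add_comm _ _
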